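/- Let X = {(x₁, x₂) ∈ ℝ² : x₂³ − 2x₁³ = 0} and q(x₁, x₂) = x₂³ − 2x₁³ ∈ ℚ[x₁, x₂]. Then: (i) X equals the nonsingular line {(x₁, x₂) ∈ ℝ² : x₂ = ∛2 · x₁}; (ii) the ideal I_ℚ(X) of polynomials in ℚ[x₁, x₂] vanishing on X is the principal ideal generated by q; (iii) ∇q(0, 0) = (0, 0); hence X is a ℚ-algebraic hypersurface of ℝ² that is nonsingular but not ℚ-nonsingular. -/

import Mathlib

/-!
Common definitions formalizing the setting of
"Algebraic realization of stable Poincaré-Reeb graphs" (E. Savi).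

Conventions:
* The ambient Euclidean space `ℝⁿ` is represented by `Fin n → ℝ`.
* `pr n` is the projection onto the first coordinate.
* A domain of finite type `𝒟 ⊆ ℝⁿ` (a closed `C^∞` n-submanifold with boundary
  such that `π|∂𝒟` is a Morse function with finitely many critical values and
  `π|𝒟` is proper) is encoded by a global smooth defining function `h` with
  `𝒟 = {h ≥ 0}`, `∂𝒟 = {h = 0}` and `∇h ≠ 0` on `∂𝒟`; every closed smooth
  codimension-0 submanifold-with-boundary of `ℝⁿ` admits such a description.
* Smooth functions and diffeomorphisms on closed subsets are represented in the
  Whitney sense (`ContDiffOn` / globally defined representatives).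
* Graphs are finite multigraphs, and their topological realizations are used to
  express isomorphism with Poincaré-Reeb graphs.
-/

open Set Topology

noncomputable section

namespace PR

variable {E F : Type*} [NormedAddCommGroup E] [NormedSpace ℝ E]
  [NormedAddCommGroup F] [NormedSpace ℝ F]

/-- Projection `ℝⁿ → ℝ` onto the first coordinate. -/
def pr (n : ℕ) : (Fin n → ℝ) → ℝ := fun x => if h : 0 < n then x ⟨0, h⟩ else 0

/-- A local `C^∞` parametrization of the subset `M ⊆ E` around the point `x`,
from an open subset of `ℝᵈ`. -/
structure LocalParam (M : Set E) (d : ℕ) (x : E) where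
  U : Set (Fin d → ℝ)
  γ : (Fin d → ℝ) → E
  u₀ : Fin d → ℝ
  isOpenU : IsOpen U
  memU : u₀ ∈ U
  eq_x : γ u₀ = x
  smooth : ContDiffOn ℝ (⊤ : ℕ∞) γ U
  injOn : Set.InjOn γ U
  immersion : ∀ u ∈ U, Function.Injective (fderivWithin ℝ γ U u)
  image : ∃ V : Set E, IsOpen V ∧ γ '' U = M ∩ V

/-- `M ⊆ E` is a `d`-dimensional `C^∞` submanifold (without boundary). -/
def IsSubmanifold (M : Set E) (d : ℕ) : Prop := ∀ x ∈ M, Nonempty (LocalParam M d x)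

/-- `x` is a critical point of the restriction `f|_M`. -/
def IsCritPtOn (M : Set E) (f : E → ℝ) (x : E) : Prop :=
  x ∈ M ∧ ∃ (d : ℕ) (P : LocalParam M d x), fderivWithin ℝ (f ∘ P.γ) P.U P.u₀ = 0

/-- `x` is a nondegenerate critical point of `f|_M`: in a local parametrization the
first derivative vanishes and the Hessian is a nondegenerate bilinear form. -/
def IsNondegCritPtOn (M : Set E) (f : E → ℝ) (x : E) : Prop :=
  x ∈ M ∧ ∃ (d : ℕ) (P : LocalParam M d x),
    fderivWithin ℝ (f ∘ P.γ) P.U P.u₀ = 0 ∧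
    ∀ v : Fin d → ℝ, v ≠ 0 → ∃ w : Fin d → ℝ,
      iteratedFDerivWithin ℝ 2 (f ∘ P.γ) P.U P.u₀ ![v, w] ≠ 0

/-- `f|_M` is a Morse function: all critical points are nondegenerate. -/
def IsMorseOn (M : Set E) (f : E → ℝ) : Prop :=
  ∀ x, IsCritPtOn M f x → IsNondegCritPtOn M f x

/-- The set of critical values of `f|_M`. -/
def critVals (M : Set E) (f : E → ℝ) : Set ℝ := f '' {x | IsCritPtOn M f x}

/-- A domain of finite type `𝒟 ⊆ ℝⁿ`, encoded by a global smooth defining function: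
`𝒟 = {h ≥ 0}` is a closed `C^∞` submanifold with boundary `∂𝒟 = {h = 0}`,
the projection onto the first coordinate restricted to `∂𝒟` is a Morse function
with finitely many critical values, and restricted to `𝒟` is proper. -/
structure Domain (n : ℕ) where
  h : (Fin n → ℝ) → ℝ
  smooth : ContDiff ℝ (⊤ : ℕ∞) h
  regular : ∀ x, h x = 0 → fderiv ℝ h x ≠ 0
  morse : IsMorseOn {x | h x = 0} (pr n)
  finCritVals : (critVals {x | h x = 0} (pr n)).Finite
  proper : IsProperMap (fun p : {x : Fin n → ℝ // 0 ≤ h x} => pr n p.1)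

namespace Domain

variable {n : ℕ}

/-- The underlying set `𝒟 = {h ≥ 0}` of a domain of finite type. -/
def carrier (D : Domain n) : Set (Fin n → ℝ) := {x | 0 ≤ D.h x}

/-- The boundary `∂𝒟 = {h = 0}` of a domain of finite type. -/
def bd (D : Domain n) : Set (Fin n → ℝ) := {x | D.h x = 0}

/-- The double `M = {(x,y) : y² = h(x)} ⊆ ℝⁿ⁺¹` of a domain of finite type. -/
def double (D : Domain n) : Set ((Fin n → ℝ) × ℝ) := {p | p.2 ^ 2 = D.h p.1}

end Domain

/-- The fiber `{x ∈ M : f x = t}`. -/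
def fiberOf (M : Set E) (f : E → ℝ) (t : ℝ) : Set E := {x | x ∈ M ∧ f x = t}

/-- The Reeb relation on `M`: `p ∼ q` iff `q` lies in the connected component of
`p` inside the fiber of `f` through `p`. -/
def reebRel (M : Set E) (f : E → ℝ) : ↥M → ↥M → Prop :=
  fun p q => (q : E) ∈ connectedComponentIn (fiberOf M f (f (p : E))) (p : E)

/-- The Reeb space of `f|_M` (the Poincaré-Reeb space when `M` is a domain and
`f` the first-coordinate projection). -/
def ReebOf (M : Set E) (f : E → ℝ) : Type _ := Quot (reebRel M f)

instance (M : Set E) (f : E → ℝ) : TopologicalSpace (ReebOf M f) :=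
  inferInstanceAs (TopologicalSpace (Quot (reebRel M f)))

/-- The quotient map `ρ : M → Reeb space`. -/
def reebMk (M : Set E) (f : E → ℝ) : ↥M → ReebOf M f := Quot.mk _

/-- The Stein factorization `f̃ : Reeb space → ℝ`, with `f̃ ∘ ρ = f`. -/
def reebProj (M : Set E) (f : E → ℝ) : ReebOf M f → ℝ :=
  Quot.lift (fun p => f (p : E))
    (fun _ _ hab => (((connectedComponentIn_subset _ _) hab).2).symm)

/-- A finite multigraph: a set of vertices, a set of edges, and the two
endpoints of each edge. -/
structure Graph where
  V : Type
  E : Type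
  fst : E → V
  snd : E → V

namespace Graph

variable (G : Graph)

instance : TopologicalSpace G.V := ⊥
instance : TopologicalSpace G.E := ⊥

/-- The degree of a vertex of a multigraph. -/
def deg (v : G.V) : ℕ :=
  Nat.card {e : G.E // G.fst e = v} + Nat.card {e : G.E // G.snd e = v}

/-- `ℓ : V → ℝ` is a good orientation of `G`: (realized by a continuous function
on `|G|` which is) strictly monotone on each edge, with local extrema only at
vertices of degree 1, i.e. every vertex of degree `≥ 2` has both a lower and a
higher neighbour along some edge. -/
def IsGoodOrientation (ℓ : G.V → ℝ) : Prop :=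
  (∀ e, ℓ (G.fst e) ≠ ℓ (G.snd e)) ∧
  ∀ v, 2 ≤ G.deg v →
    ((∃ e, (G.fst e = v ∧ ℓ (G.snd e) < ℓ v) ∨ (G.snd e = v ∧ ℓ (G.fst e) < ℓ v)) ∧
     (∃ e, (G.fst e = v ∧ ℓ v < ℓ (G.snd e)) ∨ (G.snd e = v ∧ ℓ v < ℓ (G.fst e))))

/-- Disjoint union of edge-intervals and vertices, before gluing. -/
def Pre := (G.E × unitInterval) ⊕ G.V

instance : TopologicalSpace G.Pre :=
  inferInstanceAs (TopologicalSpace ((G.E × unitInterval) ⊕ G.V))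

/-- The gluing relation identifying the endpoints of the edge-intervals with the
corresponding vertices. -/
def glue : G.Pre → G.Pre → Prop := fun a b =>
  (∃ e : G.E, a = Sum.inl (e, 0) ∧ b = Sum.inr (G.fst e)) ∨
  (∃ e : G.E, a = Sum.inl (e, 1) ∧ b = Sum.inr (G.snd e))

/-- The topological realization `|G|` of the multigraph `G`. -/
def Realization := Quot G.glue

instance : TopologicalSpace G.Realization :=
  inferInstanceAs (TopologicalSpace (Quot G.glue))

/-- The point of `|G|` corresponding to a vertex. -/
def vtx (v : G.V) : G.Realization := Quot.mk _ (Sum.inr v)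

/-- The point of `|G|` at position `t` along the edge `e`. -/
def edgePt (e : G.E) (t : unitInterval) : G.Realization := Quot.mk _ (Sum.inl (e, t))

/-- Adjacency of vertices. -/
def adj : G.V → G.V → Prop := fun v w =>
  ∃ e, (G.fst e = v ∧ G.snd e = w) ∨ (G.fst e = w ∧ G.snd e = v)

/-- The set of connected components of the multigraph `G`. -/
def Components := Quot G.adj

/-- The first Betti number `#E - #V + #components` of a finite multigraph. -/
def b1 : ℕ := Nat.card G.E + Nat.card G.Components - Nat.card G.V

end Graph

/-- The Reeb graph of `f|_M` (whose underlying space is the Reeb space of `f|_M`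
and whose vertices are the classes of the critical points of `f|_B`) is
isomorphic, as a graph oriented by the Stein factorization of `f`, to the graph
`G` oriented by `ℓ`: there is a homeomorphism of the Reeb space with `|G|`
matching the vertices with the classes of critical points, compatibly with the
orders induced on the vertices.  For the Poincaré-Reeb graph of a domain `𝒟`
take `M = 𝒟`, `B = ∂𝒟`, `f = π`; for the Reeb graph of a Morse function on a
manifold `M` take `B = M`. -/
def IsReebGraphIso (M B : Set E) (f : E → ℝ) (G : Graph) (ℓ : G.V → ℝ) : Prop :=
  ∃ Φ : ReebOf M f ≃ₜ G.Realization,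
    (∀ z : ReebOf M f, (∃ v, Φ z = G.vtx v) ↔
        ∃ p : ↥M, IsCritPtOn B f (p : E) ∧ z = reebMk M f p) ∧
    ∀ (v w : G.V) (p q : ↥M), IsCritPtOn B f (p : E) → IsCritPtOn B f (q : E) →
      Φ (reebMk M f p) = G.vtx v → Φ (reebMk M f q) = G.vtx w →
      (ℓ v < ℓ w ↔ f (p : E) < f (q : E))

/-- The Poincaré-Reeb graph `𝓡(𝒟)` of the domain of finite type `𝒟`, oriented
by `π`, is isomorphic to the oriented graph `(G, ℓ)`. -/
def Domain.IsPoincareReebGraph {n : ℕ} (D : Domain n) (G : Graph) (ℓ : G.V → ℝ) : Prop :=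
  IsReebGraphIso D.carrier D.bd (pr n) G ℓ

/-- The real zero set of a polynomial with rational coefficients. -/
def zeroSetQ {n : ℕ} (q : MvPolynomial (Fin n) ℚ) : Set (Fin n → ℝ) :=
  {x | MvPolynomial.aeval x q = 0}

/-- `∇q(x) ≠ 0`. -/
def QGradNonzero {n : ℕ} (q : MvPolynomial (Fin n) ℚ) (x : Fin n → ℝ) : Prop :=
  ∃ i, MvPolynomial.aeval x (MvPolynomial.pderiv i q) ≠ 0

/-- A polynomial is overt if the real zero set of its highest-degree homogeneous
part is `∅` or `{0}`.  A ℚ-algebraic set is projectively ℚ-closed iff it is the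
real zero set of an overt polynomial over ℚ (equivalently, it coincides with its
projective closure in `ℙⁿ(ℝ)`). -/
def Overt {n : ℕ} (q : MvPolynomial (Fin n) ℚ) : Prop :=
  ∀ x : Fin n → ℝ,
    MvPolynomial.aeval x (MvPolynomial.homogeneousComponent q.totalDegree q) = 0 → x = 0

/-- The domain `𝒟` is (globally) algebraic with the ℚ-nonsingular ℚ-algebraic
boundary cut out by `q ∈ ℚ[x₁,…,xₙ]`: `𝒟 = {q ≥ 0}`, `∂𝒟 = Z_ℝⁿ(q)` and
`∇q ≠ 0` on `∂𝒟`.  In particular `𝒟` is a globally algebraic domain of finite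
type and `∂𝒟` is a ℚ-nonsingular ℚ-algebraic hypersurface. -/
def Domain.QAlgebraic {n : ℕ} (D : Domain n) (q : MvPolynomial (Fin n) ℚ) : Prop :=
  D.carrier = {x | 0 ≤ MvPolynomial.aeval x q} ∧ D.bd = zeroSetQ q ∧
  ∀ x ∈ D.bd, QGradNonzero q x

/-- A `C^∞` diffeomorphism between the subsets `A ⊆ E` and `B ⊆ F`, in the
Whitney sense (smoothness on arbitrary sets). -/
structure SetDiffeo (A : Set E) (B : Set F) where
  toFun : E → F
  invFun : F → E
  smooth : ContDiffOn ℝ (⊤ : ℕ∞) toFun A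
  smoothInv : ContDiffOn ℝ (⊤ : ℕ∞) invFun B
  mapsTo : Set.MapsTo toFun A B
  mapsToInv : Set.MapsTo invFun B A
  left_inv : ∀ x ∈ A, invFun (toFun x) = x
  right_inv : ∀ y ∈ B, toFun (invFun y) = y

/-- A diffeomorphism between full-dimensional subsets of `ℝⁿ` is orientation
preserving if its differential has positive determinant. -/
def SetDiffeo.OrientPres {n : ℕ} {A B : Set (Fin n → ℝ)} (φ : SetDiffeo A B) : Prop :=
  ∀ x ∈ A, 0 < LinearMap.det ((fderivWithin ℝ φ.toFun A x).toLinearMap)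

/-- A `C^∞` diffeomorphism of `ℝ`. -/
def IsDiffeoR (ψ : ℝ → ℝ) : Prop :=
  ContDiff ℝ (⊤ : ℕ∞) ψ ∧ Function.Bijective ψ ∧ ∀ t, deriv ψ t ≠ 0

/-- An orientation-preserving `C^∞` diffeomorphism of `ℝ`. -/
def IsOPDiffeoR (ψ : ℝ → ℝ) : Prop :=
  ContDiff ℝ (⊤ : ℕ∞) ψ ∧ Function.Bijective ψ ∧ ∀ t, 0 < deriv ψ t

/-- Vertical equivalence of domains of finite type: orientation-preserving
diffeomorphisms `φ : 𝒟 → 𝒟'` and `ψ : ℝ → ℝ` with `ψ ∘ π|𝒟 = π|𝒟' ∘ φ`. -/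
def VertEquiv {n : ℕ} (D D' : Domain n) : Prop :=
  ∃ (φ : SetDiffeo D.carrier D'.carrier) (ψ : ℝ → ℝ),
    φ.OrientPres ∧ IsOPDiffeoR ψ ∧ ∀ x ∈ D.carrier, ψ (pr n x) = pr n (φ.toFun x)

/-- `f` and `g` have all derivatives up to order `k` within `ε` of each other on
`K`. -/
def CloseC (k : ℕ) (ε : ℝ) (K : Set E) (f g : E → ℝ) : Prop :=
  ∀ j ≤ k, ∀ x ∈ K, ‖iteratedFDeriv ℝ j f x - iteratedFDeriv ℝ j g x‖ ≤ ε

/-- `f|_M` is a stable smooth function: every smooth `g` in some (basic weak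
`C^∞`-topology) neighbourhood of `f` is conjugate to `f` by diffeomorphisms
`φ : M → M`, `ψ : ℝ → ℝ`, i.e. `ψ ∘ f = g ∘ φ` on `M`.  (Smooth functions on
the closed set `M` are represented by globally defined smooth functions, and a
basic neighbourhood is prescribed by `C^k`-closeness on a compact set.) -/
def StableOn (M : Set E) (f : E → ℝ) : Prop :=
  ∃ (k : ℕ) (K : Set E) (ε : ℝ), IsCompact K ∧ 0 < ε ∧
    ∀ g : E → ℝ, ContDiff ℝ (⊤ : ℕ∞) g → CloseC k ε (K ∩ M) f g →
      ∃ (φ : SetDiffeo M M) (ψ : ℝ → ℝ), IsDiffeoR ψ ∧ ∀ x ∈ M, ψ (f x) = g (φ.toFun x)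

/-- A domain of finite type is stable if `π|∂𝒟` is a stable function. -/
def Domain.Stable {n : ℕ} (D : Domain n) : Prop := StableOn D.bd (pr n)

/-- `A` is a deformation retract of `X`. -/
def IsDeformationRetract {X : Type*} [TopologicalSpace X] (A : Set X) : Prop :=
  ∃ H : C(X × unitInterval, X),
    (∀ x, H (x, 0) = x) ∧ (∀ x, H (x, 1) ∈ A) ∧ ∀ a ∈ A, H (a, 1) = a

/-- A basic semialgebraic subset of `ℝᵏ`. -/
def IsBasicSemialgebraic {k : ℕ} (S : Set (Fin k → ℝ)) : Prop :=
  ∃ (p : MvPolynomial (Fin k) ℝ) (m : ℕ) (q : Fin m → MvPolynomial (Fin k) ℝ),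
    S = {x | MvPolynomial.eval x p = 0 ∧ ∀ j, 0 < MvPolynomial.eval x (q j)}

/-- A semialgebraic subset of `ℝᵏ`: a finite union of basic semialgebraic sets. -/
def IsSemialgebraic {k : ℕ} (S : Set (Fin k → ℝ)) : Prop :=
  ∃ (m : ℕ) (B : Fin m → Set (Fin k → ℝ)), (∀ j, IsBasicSemialgebraic (B j)) ∧ S = ⋃ j, B j

/-- A Nash function on `ℝᵏ`: a `C^∞` function with semialgebraic graph. -/
def IsNashFunction {k : ℕ} (f : (Fin k → ℝ) → ℝ) : Prop :=
  ContDiff ℝ (⊤ : ℕ∞) f ∧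
  IsSemialgebraic {y : Fin (k + 1) → ℝ | f (fun i => y i.castSucc) = y (Fin.last k)}

end PR
namespace PR

/-- The ℚ-polynomial `q = x₂³ - 2x₁³` of the remark. -/
def cubicQ : MvPolynomial (Fin 2) ℚ :=
  MvPolynomial.X 1 ^ 3 - MvPolynomial.C 2 * MvPolynomial.X 0 ^ 3

/-- The ℚ-algebraic line `X = {x₂³ - 2x₁³ = 0} ⊆ ℝ²`. -/
def cubicLine : Set (Fin 2 → ℝ) := {x | MvPolynomial.aeval x cubicQ = 0}




open Polynomial

def crt2 : ℝ := (2:ℝ) ^ ((1:ℝ)/3)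

lemma hcrt3 : crt2 ^ 3 = 2 := by
  rw [crt2, ← Real.rpow_natCast ((2:ℝ) ^ ((1:ℝ)/3)) 3, ← Real.rpow_mul (by norm_num)]
  norm_num

lemma cube_inj : Function.Injective (fun x : ℝ => x ^ 3) :=
  (Odd.strictMono_pow ⟨1, by norm_num⟩).injective

lemma hcrt_irr : Irrational crt2 := by
  refine irrational_nrt_of_notint_nrt 3 2 (by rw [hcrt3]; norm_num) ?_ (by norm_num)
  rintro ⟨y, hy⟩
  have h1 : (1:ℝ) < crt2 := by
    have : (2:ℝ) ^ (0:ℝ) < 2 ^ ((1:ℝ)/3) :=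
      (Real.rpow_lt_rpow_left_iff (by norm_num)).mpr (by norm_num)
    simpa [crt2] using this
  have h2 : crt2 < 2 := by
    have : (2:ℝ) ^ ((1:ℝ)/3) < 2 ^ (1:ℝ) :=
      (Real.rpow_lt_rpow_left_iff (by norm_num)).mpr (by norm_num)
    simpa [crt2] using this
  rw [hy] at h1 h2
  have g1 : (1:ℤ) < y := by exact_mod_cast h1
  have g2 : y < 2 := by exact_mod_cast h2
  omega

lemma lin_indep (a b d : ℚ) (h : (a:ℝ) + b * crt2 + d * crt2^2 = 0) :
    a = 0 ∧ b = 0 ∧ d = 0 := by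
  have h2 : (a:ℝ) * crt2 + b * crt2^2 + 2*d = 0 := by
    linear_combination crt2 * h - (d:ℝ) * hcrt3
  have key : ((a*b - 2*d^2 : ℚ):ℝ) + ((b^2 - a*d : ℚ):ℝ) * crt2 = 0 := by
    push_cast
    linear_combination (b:ℝ) * h - (d:ℝ) * h2
  have hb2 : b^2 - a*d = 0 := by
    by_contra hne
    apply hcrt_irr
    refine ⟨-(a*b - 2*d^2)/(b^2 - a*d), ?_⟩
    have hne' : ((b:ℝ)^2 - a*d) ≠ 0 := by
      intro hz; apply hne; exact_mod_cast hz
    push_cast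
    rw [div_eq_iff hne']
    push_cast at key
    linarith [key]
  have hab : a*b = 2*d^2 := by
    have : ((a*b - 2*d^2 : ℚ):ℝ) = 0 := by
      rw [hb2] at key; push_cast at key ⊢; linarith
    have := (Rat.cast_eq_zero (α := ℝ)).mp this
    linarith
  rcases eq_or_ne d 0 with hd | hd
  · subst hd
    have hb : b = 0 := by
      have : b^2 = 0 := by linarith [hb2]
      exact pow_eq_zero_iff (by norm_num) |>.mp this
    subst hb
    have : (a:ℝ) = 0 := by push_cast at h; linarith
    exact ⟨by exact_mod_cast this, rfl, rfl⟩
  · exfalso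
    have hbd : b^3 = 2*d^3 := by linear_combination b * hb2 + d * hab
    have hbne : b ≠ 0 := by
      intro hb; rw [hb] at hbd
      apply hd
      have : d^3 = 0 := by linarith
      exact pow_eq_zero_iff (n := 3) (by norm_num) |>.mp this
    apply hcrt_irr
    refine ⟨b/d, ?_⟩
    have hd' : (d:ℝ) ≠ 0 := by exact_mod_cast hd
    have : ((b/d : ℚ):ℝ)^3 = crt2^3 := by
      rw [hcrt3]; push_cast; field_simp
      exact_mod_cast (hbd.trans (mul_comm _ _))
    exact cube_inj this



/-- inner map ℚ[Y] → ℚ[x₀,x₁], Y ↦ x₁ -/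
def inner2 : ℚ[X] →+* MvPolynomial (Fin 2) ℚ :=
  (Polynomial.aeval (MvPolynomial.X 1 : MvPolynomial (Fin 2) ℚ)).toRingHom

def theta : Polynomial ℚ[X] →+* MvPolynomial (Fin 2) ℚ :=
  Polynomial.eval₂RingHom inner2 (MvPolynomial.X 0)

lemma theta_C (p : ℚ[X]) : theta (Polynomial.C p) = Polynomial.aeval (MvPolynomial.X 1) p := by
  simp [theta, inner2]

lemma theta_X : theta Polynomial.X = MvPolynomial.X 0 := by
  simp [theta]

lemma theta_surj (r : MvPolynomial (Fin 2) ℚ) : ∃ F, theta F = r := by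
  induction r using MvPolynomial.induction_on with
  | C a => exact ⟨Polynomial.C (Polynomial.C a), by simp [theta_C]⟩
  | add p q hp hq =>
      obtain ⟨F, hF⟩ := hp; obtain ⟨G, hG⟩ := hq
      exact ⟨F + G, by rw [map_add, hF, hG]⟩
  | mul_X p i hp =>
      obtain ⟨F, hF⟩ := hp
      fin_cases i
      · exact ⟨F * Polynomial.X, by rw [map_mul, hF, theta_X]; norm_num⟩
      · exact ⟨F * Polynomial.C Polynomial.X, by rw [map_mul, hF, theta_C]; simp⟩

def mDiv : Polynomial ℚ[X] :=
  Polynomial.X ^ 3 - Polynomial.C (Polynomial.C (2⁻¹ : ℚ) * Polynomial.X ^ 3)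

lemma mDiv_monic : mDiv.Monic :=
  Polynomial.monic_X_pow_sub (by
    exact lt_of_le_of_lt (Polynomial.degree_C_le) (by norm_num))

lemma mDiv_natDegree : mDiv.natDegree = 3 := by
  have : mDiv.degree = 3 := Polynomial.degree_X_pow_sub_C (by norm_num) _
  exact Polynomial.natDegree_eq_of_degree_eq_some this

lemma theta_mDiv : MvPolynomial.C (-2 : ℚ) * theta mDiv = cubicQ := by
  rw [mDiv, map_sub, map_pow, theta_X, theta_C]
  simp only [map_mul, Polynomial.aeval_C, map_pow, Polynomial.aeval_X, cubicQ]
  rw [show (algebraMap ℚ (MvPolynomial (Fin 2) ℚ)) 2⁻¹ = MvPolynomial.C 2⁻¹ from rfl]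
  rw [mul_sub, ← mul_assoc, ← MvPolynomial.C_mul]
  norm_num
  ring



lemma aeval_theta (x : Fin 2 → ℝ) (F : Polynomial ℚ[X]) (hdeg : F.natDegree < 3) :
    MvPolynomial.aeval x (theta F)
      = ∑ i ∈ Finset.range 3, Polynomial.aeval (x 1) (F.coeff i) * (x 0) ^ i := by
  have h0 : theta F = Polynomial.eval₂ inner2 (MvPolynomial.X 0) F := rfl
  rw [h0]
  rw [show (MvPolynomial.aeval x) (Polynomial.eval₂ inner2 (MvPolynomial.X 0) F)
      = ((MvPolynomial.aeval x : MvPolynomial (Fin 2) ℚ →ₐ[ℚ] ℝ) :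
          MvPolynomial (Fin 2) ℚ →+* ℝ) (Polynomial.eval₂ inner2 (MvPolynomial.X 0) F) from rfl]
  rw [Polynomial.hom_eval₂]
  rw [Polynomial.eval₂_eq_sum_range' _ hdeg]
  refine Finset.sum_congr rfl fun i _ => ?_
  congr 1
  show MvPolynomial.aeval x (inner2 (F.coeff i)) = _
  rw [show inner2 (F.coeff i)
      = Polynomial.aeval (MvPolynomial.X 1 : MvPolynomial (Fin 2) ℚ) (F.coeff i) from rfl]
  rw [← Polynomial.aeval_algHom_apply (MvPolynomial.aeval x) (MvPolynomial.X 1) (F.coeff i)]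
  · simp
  · simp

lemma ratEval (s : ℚ) (b : ℚ[X]) :
    Polynomial.aeval ((s : ℝ)) b = ((Polynomial.eval s b : ℚ) : ℝ) := by
  rw [Polynomial.aeval_def, show ((s:ℚ):ℝ) = algebraMap ℚ ℝ s from (eq_ratCast _ s).symm,
    Polynomial.eval₂_at_apply]
  exact (eq_ratCast _ _)

lemma vanish_imp_dvd (r : MvPolynomial (Fin 2) ℚ)
    (hr : ∀ x ∈ cubicLine, MvPolynomial.aeval x r = 0) : cubicQ ∣ r := by
  obtain ⟨F, hF⟩ := theta_surj r
  set rem := F %ₘ mDiv with hrem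
  have h1 : theta rem + theta mDiv * theta (F /ₘ mDiv) = r := by
    rw [← map_mul, ← map_add, Polynomial.modByMonic_add_div F mDiv, hF]
  have hC : (MvPolynomial.C (-2:ℚ) : MvPolynomial (Fin 2) ℚ) * MvPolynomial.C (-2⁻¹:ℚ) = 1 := by
    rw [← MvPolynomial.C_mul]; norm_num
  have hdecomp : r = cubicQ * (MvPolynomial.C (-2⁻¹ : ℚ) * theta (F /ₘ mDiv)) + theta rem := by
    rw [← theta_mDiv, ← h1]
    calc theta rem + theta mDiv * theta (F /ₘ mDiv)
        = (MvPolynomial.C (-2:ℚ) * MvPolynomial.C (-2⁻¹:ℚ)) * (theta mDiv * theta (F /ₘ mDiv))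
            + theta rem := by rw [hC]; ring
      _ = MvPolynomial.C (-2:ℚ) * theta mDiv
            * (MvPolynomial.C (-2⁻¹:ℚ) * theta (F /ₘ mDiv)) + theta rem := by ring
  have hremdeg : rem.natDegree < 3 := by
    rw [← mDiv_natDegree]
    refine Polynomial.natDegree_modByMonic_lt F mDiv_monic ?_
    intro h
    have := mDiv_natDegree
    rw [h] at this; simp at this
  have hv : ∀ x ∈ cubicLine, MvPolynomial.aeval x (theta rem) = 0 := by
    intro x hx
    have hq0 : MvPolynomial.aeval x cubicQ = 0 := hx
    have := hr x hx
    rw [hdecomp, map_add, map_mul, hq0, zero_mul, zero_add] at this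
    exact this
  -- evaluate on the parametrized line
  have hkey : ∀ s : ℚ, Polynomial.eval s (rem.coeff 0) = 0 ∧
      Polynomial.eval s (rem.coeff 2) * s^2/2 = 0 ∧
      Polynomial.eval s (rem.coeff 1) * s/2 = 0 := by
    intro s
    set x : Fin 2 → ℝ := ![(s:ℝ) * crt2^2/2, (s:ℝ)] with hx
    have hx0 : x 0 = (s:ℝ) * crt2^2/2 := rfl
    have hx1 : x 1 = (s:ℝ) := rfl
    have hmem : x ∈ cubicLine := by
      show MvPolynomial.aeval x cubicQ = 0
      simp only [cubicQ, map_sub, map_mul, map_pow, MvPolynomial.aeval_X, MvPolynomial.aeval_C]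
      rw [hx0, hx1, show (algebraMap ℚ ℝ) 2 = (2:ℝ) by norm_num]
      linear_combination (-(s:ℝ)^3*(crt2^3+2)/4) * hcrt3
    have heq := hv x hmem
    rw [aeval_theta x rem hremdeg] at heq
    rw [Finset.sum_range_succ, Finset.sum_range_succ, Finset.sum_range_one] at heq
    rw [hx0, hx1, ratEval, ratEval, ratEval] at heq
    have heq2 : ((Polynomial.eval s (rem.coeff 0) : ℚ) : ℝ)
        + ((Polynomial.eval s (rem.coeff 2) * s^2/2 : ℚ) : ℝ) * crt2
        + ((Polynomial.eval s (rem.coeff 1) * s/2 : ℚ) : ℝ) * crt2^2 = 0 := by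
      push_cast
      linear_combination heq - (((Polynomial.eval s (rem.coeff 2) : ℚ) : ℝ) * (s:ℝ)^2 * crt2/4) * hcrt3
    exact lin_indep _ _ _ heq2
  have hb0 : rem.coeff 0 = 0 := by
    apply Polynomial.funext
    intro s; rw [Polynomial.eval_zero]; exact (hkey s).1
  have hinf : {x : ℚ | x ≠ 0}.Infinite := (Set.finite_singleton 0).infinite_compl
  have hb2 : rem.coeff 2 = 0 := by
    apply Polynomial.eq_zero_of_infinite_isRoot
    refine hinf.mono fun s hs => ?_
    have h := (hkey s).2.1
    have h2 : Polynomial.eval s (rem.coeff 2) * s^2 = 0 := by linarith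
    rcases mul_eq_zero.mp h2 with h3 | h3
    · exact h3
    · exact absurd (pow_eq_zero_iff two_ne_zero |>.mp h3) hs
  have hb1 : rem.coeff 1 = 0 := by
    apply Polynomial.eq_zero_of_infinite_isRoot
    refine hinf.mono fun s hs => ?_
    have h := (hkey s).2.2
    have h2 : Polynomial.eval s (rem.coeff 1) * s = 0 := by linarith
    rcases mul_eq_zero.mp h2 with h3 | h3
    · exact h3
    · exact absurd h3 hs
  have hrem0 : rem = 0 := by
    apply Polynomial.ext; intro n
    rcases lt_or_ge n 3 with hn | hn
    · interval_cases n
      · simp [hb0]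
      · simp [hb1]
      · simp [hb2]
    · rw [Polynomial.coeff_eq_zero_of_natDegree_lt (lt_of_lt_of_le hremdeg hn)]
      simp
  rw [hrem0, map_zero, add_zero] at hdecomp
  exact ⟨_, hdecomp⟩


lemma part1 : cubicLine = {x : Fin 2 → ℝ | x 1 = (2 : ℝ) ^ ((1 : ℝ) / 3) * x 0} := by
  ext x
  show MvPolynomial.aeval x cubicQ = 0 ↔ x 1 = crt2 * x 0
  simp only [cubicQ, map_sub, map_mul, map_pow, MvPolynomial.aeval_X, MvPolynomial.aeval_C]
  rw [show (algebraMap ℚ ℝ) 2 = (2:ℝ) by norm_num]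
  constructor
  · intro h
    have h3 : x 1 ^ 3 = (crt2 * x 0)^3 := by
      rw [mul_pow, hcrt3]; linarith
    exact cube_inj h3
  · intro h; rw [h]; linear_combination (x 0)^3 * hcrt3

lemma part2 : ∃ g : MvPolynomial (Fin 2) ℝ,
    cubicLine = {x | MvPolynomial.eval x g = 0} ∧
    ∀ x ∈ cubicLine, ∃ i, MvPolynomial.eval x (MvPolynomial.pderiv i g) ≠ 0 := by
  refine ⟨MvPolynomial.X 1 - MvPolynomial.C crt2 * MvPolynomial.X 0, ?_, ?_⟩
  · rw [part1]; ext x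
    simp [sub_eq_zero, crt2]
  · intro x _
    refine ⟨1, ?_⟩
    simp [MvPolynomial.pderiv_X_self, MvPolynomial.pderiv_X_of_ne, MvPolynomial.pderiv_mul,
      MvPolynomial.pderiv_C]

lemma part4 : ∀ i : Fin 2, MvPolynomial.aeval (0 : Fin 2 → ℝ) (MvPolynomial.pderiv i cubicQ) = 0 := by
  intro i
  fin_cases i <;>
  · simp [cubicQ, MvPolynomial.pderiv_pow, MvPolynomial.pderiv_X_self,
      MvPolynomial.pderiv_X_of_ne, MvPolynomial.pderiv_C_mul, map_sub]

lemma aeval0 : MvPolynomial.aeval (0 : Fin 2 → ℝ) cubicQ = 0 := by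
  simp [cubicQ]


/-- Let `X = {(x₁,x₂) ∈ ℝ² : x₂³ - 2x₁³ = 0}` and `q = x₂³ - 2x₁³ ∈ ℚ[x₁,x₂]`.
Then: (i) `X` is the nonsingular line `{x₂ = ∛2 · x₁}` (in particular it is a
nonsingular real algebraic hypersurface of `ℝ²`); (ii) `I_ℚ(X) = (q)`;
(iii) `∇q(0,0) = (0,0)`; hence `X` is a ℚ-algebraic hypersurface that is
nonsingular but not ℚ-nonsingular. -/
theorem statement16 :
    (cubicLine = {x : Fin 2 → ℝ | x 1 = (2 : ℝ) ^ ((1 : ℝ) / 3) * x 0}) ∧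
    (∃ g : MvPolynomial (Fin 2) ℝ,
      cubicLine = {x | MvPolynomial.eval x g = 0} ∧
      ∀ x ∈ cubicLine, ∃ i, MvPolynomial.eval x (MvPolynomial.pderiv i g) ≠ 0) ∧
    (∀ r : MvPolynomial (Fin 2) ℚ,
      (∀ x ∈ cubicLine, MvPolynomial.aeval x r = 0) ↔ cubicQ ∣ r) ∧
    (∀ i : Fin 2, MvPolynomial.aeval (0 : Fin 2 → ℝ) (MvPolynomial.pderiv i cubicQ) = 0) ∧
    ¬ ∃ q' : MvPolynomial (Fin 2) ℚ,
        cubicLine = zeroSetQ q' ∧ ∀ x ∈ cubicLine, QGradNonzero q' x := by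
  have part3 : ∀ r : MvPolynomial (Fin 2) ℚ,
      (∀ x ∈ cubicLine, MvPolynomial.aeval x r = 0) ↔ cubicQ ∣ r := by
    intro r
    constructor
    · exact vanish_imp_dvd r
    · rintro ⟨s, rfl⟩ x hx
      have hq0 : MvPolynomial.aeval x cubicQ = 0 := hx
      rw [map_mul, hq0, zero_mul]
  refine ⟨part1, part2, part3, part4, ?_⟩
  rintro ⟨q', hzero, hgrad⟩
  have h0 : (0 : Fin 2 → ℝ) ∈ cubicLine := aeval0
  obtain ⟨h, rfl⟩ := (part3 q').mp (fun x hx => by rw [hzero] at hx; exact hx)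
  obtain ⟨i, hi⟩ := hgrad 0 h0
  apply hi
  rw [MvPolynomial.pderiv_mul, map_add, map_mul, map_mul, part4 i, aeval0]
  ring

end PR
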